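/- The d-tensor C^i_{jk} := A^i_{jk}·y_i/(y_j y_k) (no summation) satisfies: (a) C^i_{jk} = C^i_{kj} for all i, j, k; (b) Σ_{m=1}^{4} C^i_{jm}·y_m = 0 for all i, j; and (c) Σ_{m=1}^{4} C^m_{jm} = 0 for all j (sum over m with m appearing as both the upper index and one lower index). -/

import Mathlib

/-- The d-tensor `C^i_{jk} = A^i_{jk}·y_i/(y_j y_k)` satisfies:
(a) `C^i_{jk} = C^i_{kj}`; (b) `Σ_m C^i_{jm}·y_m = 0`; (c) `Σ_m C^m_{jm} = 0`. -/
theorem berwald_moor_C_properties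
    (y : Fin 4 → ℝ) (hy : ∀ i, 0 < y i)
    (A : Fin 4 → Fin 4 → Fin 4 → ℝ)
    (hA : ∀ i j k, A i j k =
      (2 * (if i = j then (1 : ℝ) else 0) + 2 * (if i = k then (1 : ℝ) else 0)
        + 2 * (if j = k then (1 : ℝ) else 0)
        - 8 * (if i = j then (1 : ℝ) else 0) * (if j = k then (1 : ℝ) else 0)
        - 1) / 8)
    (C : Fin 4 → Fin 4 → Fin 4 → ℝ)
    (hC : ∀ i j k, C i j k = A i j k * y i / (y j * y k)) :
    (∀ i j k, C i j k = C i k j) ∧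
    (∀ i j, ∑ m, C i j m * y m = 0) ∧
    (∀ j, ∑ m, C m j m = 0) := by
  have hne : ∀ i, y i ≠ 0 := fun i => (hy i).ne'
  have hsumA : ∀ i j : Fin 4, ∑ m, A i j m = 0 := by
    intro i j
    have e : ∀ m : Fin 4, A i j m =
        (2 * (if i = j then (1 : ℝ) else 0) - 1) / 8
          + (1 / 4) * (if i = m then (1 : ℝ) else 0)
          + ((2 - 8 * (if i = j then (1 : ℝ) else 0)) / 8) * (if j = m then (1 : ℝ) else 0) := by
      intro m; rw [hA]; ring
    simp only [e]
    rw [Finset.sum_add_distrib, Finset.sum_add_distrib, ← Finset.mul_sum, ← Finset.mul_sum]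
    simp only [Finset.sum_const, Finset.sum_ite_eq, Finset.mem_univ, if_true,
      Finset.card_univ, Fintype.card_fin, nsmul_eq_mul]
    ring
  have hsumA2 : ∀ j : Fin 4, ∑ m, A m j m = 0 := by
    intro j
    have e : ∀ m : Fin 4, A m j m = 1 / 8 - (1 / 2) * (if j = m then (1 : ℝ) else 0) := by
      intro m; rw [hA]
      by_cases h : j = m
      · subst h; norm_num
      · simp [h, Ne.symm h]
        norm_num
    simp only [e]
    rw [Finset.sum_sub_distrib, ← Finset.mul_sum]
    simp only [Finset.sum_const, Finset.sum_ite_eq, Finset.mem_univ, if_true,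
      Finset.card_univ, Fintype.card_fin, nsmul_eq_mul]
    ring
  refine ⟨?_, ?_, ?_⟩
  · intro i j k
    have hAsym : A i j k = A i k j := by
      rw [hA, hA]
      by_cases h1 : i = j <;> by_cases h2 : i = k <;> by_cases h3 : j = k <;>
        simp_all [eq_comm]
    rw [hC, hC, hAsym]
    ring
  · intro i j
    have h : ∀ m, C i j m * y m = (y i / y j) * A i j m := by
      intro m
      rw [hC]
      field_simp
      rw [mul_comm (y j) (y m), ← div_div, mul_div_assoc, div_self (hne m), mul_one]
    simp only [h]
    rw [← Finset.mul_sum, hsumA, mul_zero]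
  · intro j
    have h : ∀ m, C m j m = (1 / y j) * A m j m := by
      intro m
      rw [hC]
      field_simp
      rw [← div_div, mul_div_assoc, div_self (hne m), mul_one]
    simp only [h]
    rw [← Finset.mul_sum, hsumA2, mul_zero]
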